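/- Let S be a 7×7 real matrix (rows and columns 1-indexed) whose zero entries are exactly at positions (1,1), (1,2), (1,3), (2,1), (2,3), (2,4), (3,1), (3,4), (3,5), (3,6), (4,1), (4,2), (4,5), (4,7), (5,3), (5,4), (5,6), (6,2), (6,3), (6,6), (6,7), (7,5), (7,6), (7,7), whose remaining entries are strictly positive, and which has rank 4. Then there is no 7×7 complex matrix M with rank M = 4 such that S_{ij} = |M_{ij}|² for all i, j. -/

import Mathlib

private lemma rowsDep {K : Type*} [Field K] (A : Matrix (Fin 7) (Fin 7) K)
    (h4 : A.rank ≤ 4) (r0 r1 r2 r3 r4 : Fin 7) :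
    ∃ g : Fin 5 → K, (g 0 ≠ 0 ∨ g 1 ≠ 0 ∨ g 2 ≠ 0 ∨ g 3 ≠ 0 ∨ g 4 ≠ 0) ∧
      ∀ j, g 0 * A r0 j + g 1 * A r1 j + g 2 * A r2 j + g 3 * A r3 j + g 4 * A r4 j = 0 := by
  set f : Fin 5 → Fin 7 := ![r0, r1, r2, r3, r4] with hf
  have hnli : ¬ LinearIndependent K (fun i => A (f i)) := by
    intro hli
    have hli' : LinearIndependent K (A.submatrix f id) := hli
    have h5 : (A.submatrix f id).rank = 5 := by
      have h := hli'.rank_matrix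
      simp at h
      exact h
    have hle : (A.submatrix f id).rank ≤ A.rank := by
      rw [Matrix.rank_eq_finrank_span_row, Matrix.rank_eq_finrank_span_row]
      refine Submodule.finrank_mono (Submodule.span_mono ?_)
      rintro x ⟨i, rfl⟩
      exact ⟨f i, rfl⟩
    omega
  obtain ⟨g, hsum, i, hi⟩ := Fintype.not_linearIndependent_iff.mp hnli
  refine ⟨g, ?_, ?_⟩
  · fin_cases i <;> tauto
  · intro j
    have := congrFun hsum j
    simpa [Fin.sum_univ_five, hf] using this

private lemma key {K : Type*} [Field K] (A : Matrix (Fin 7) (Fin 7) K) (h4 : A.rank ≤ 4)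
    (z00 : A 0 0 = 0) (z01 : A 0 1 = 0) (z02 : A 0 2 = 0)
    (z10 : A 1 0 = 0) (z12 : A 1 2 = 0) (z13 : A 1 3 = 0)
    (z20 : A 2 0 = 0) (z23 : A 2 3 = 0) (z24 : A 2 4 = 0) (z25 : A 2 5 = 0)
    (z30 : A 3 0 = 0) (z31 : A 3 1 = 0) (z34 : A 3 4 = 0) (z36 : A 3 6 = 0)
    (z42 : A 4 2 = 0) (z43 : A 4 3 = 0) (z45 : A 4 5 = 0)
    (z51 : A 5 1 = 0) (z52 : A 5 2 = 0) (z55 : A 5 5 = 0) (z56 : A 5 6 = 0)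
    (n40 : A 4 0 ≠ 0) (n14 : A 1 4 ≠ 0) (n21 : A 2 1 ≠ 0) (n33 : A 3 3 ≠ 0)
    (n22 : A 2 2 ≠ 0) (n15 : A 1 5 ≠ 0) (n53 : A 5 3 ≠ 0) (n41 : A 4 1 ≠ 0) :
    A 0 5 * A 1 4 * A 3 3 = A 0 4 * A 1 5 * A 3 3 + A 0 3 * A 1 4 * A 3 5 ∧
    A 0 6 * A 1 4 * A 2 1 + A 0 4 * A 1 1 * A 2 6 = A 0 4 * A 1 6 * A 2 1 ∧
    (A 0 5 * A 1 6 - A 0 6 * A 1 5) * A 4 0 * A 5 3 = A 0 3 * A 1 5 * A 4 6 * A 5 0 := by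
  -- Dependency among rows 0,1,2,3,4
  obtain ⟨g, gnz, hg⟩ := rowsDep A h4 0 1 2 3 4
  have e0 := hg 0; have e1 := hg 1; have e3 := hg 3
  have e4 := hg 4; have e5 := hg 5; have e6 := hg 6
  rw [z00, z10, z20, z30] at e0
  rw [z01, z31] at e1
  rw [z13, z23, z43] at e3
  rw [z24, z34] at e4
  rw [z25, z45] at e5
  rw [z36] at e6
  have hg4 : g 4 = 0 := by
    have : g 4 * A 4 0 = 0 := by linear_combination e0
    rcases mul_eq_zero.mp this with h | h
    · exact h
    · exact absurd h n40
  have hg0 : g 0 ≠ 0 := by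
    intro h0
    have h1 : g 1 = 0 := by
      have : g 1 * A 1 4 = 0 := by
        linear_combination e4 - A 0 4 * h0 - A 4 4 * hg4
      rcases mul_eq_zero.mp this with h | h
      · exact h
      · exact absurd h n14
    have h2 : g 2 = 0 := by
      have : g 2 * A 2 1 = 0 := by
        linear_combination e1 - A 1 1 * h1 - A 4 1 * hg4
      rcases mul_eq_zero.mp this with h | h
      · exact h
      · exact absurd h n21
    have h3 : g 3 = 0 := by
      have : g 3 * A 3 3 = 0 := by
        linear_combination e3 - A 0 3 * h0
      rcases mul_eq_zero.mp this with h | h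
      · exact h
      · exact absurd h n33
    rcases gnz with h | h | h | h | h <;> [exact h h0; exact h h1; exact h h2; exact h h3; exact h hg4]
  have E1 : A 0 5 * A 1 4 * A 3 3 = A 0 4 * A 1 5 * A 3 3 + A 0 3 * A 1 4 * A 3 5 := by
    have hX : g 0 * (A 0 5 * A 1 4 * A 3 3 - A 0 4 * A 1 5 * A 3 3 - A 0 3 * A 1 4 * A 3 5) = 0 := by
      linear_combination A 1 4 * A 3 3 * e5 - A 1 5 * A 3 3 * e4 - A 3 5 * A 1 4 * e3
        + A 1 5 * A 3 3 * A 4 4 * hg4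
    rcases mul_eq_zero.mp hX with h | h
    · exact absurd h hg0
    · linear_combination h
  have E2 : A 0 6 * A 1 4 * A 2 1 + A 0 4 * A 1 1 * A 2 6 = A 0 4 * A 1 6 * A 2 1 := by
    have hX : g 0 * (A 0 6 * A 1 4 * A 2 1 + A 0 4 * A 1 1 * A 2 6 - A 0 4 * A 1 6 * A 2 1) = 0 := by
      linear_combination A 1 4 * A 2 1 * e6 + (A 2 6 * A 1 1 - A 2 1 * A 1 6) * e4
        - A 2 6 * A 1 4 * e1
        - (A 1 4 * A 2 1 * A 4 6 + A 4 4 * (A 2 6 * A 1 1 - A 2 1 * A 1 6) - A 2 6 * A 1 4 * A 4 1) * hg4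
    rcases mul_eq_zero.mp hX with h | h
    · exact absurd h hg0
    · linear_combination h
  -- Dependency among rows 0,1,2,4,5
  obtain ⟨u, unz, hu⟩ := rowsDep A h4 0 1 2 4 5
  have f0 := hu 0; have f1 := hu 1; have f2 := hu 2
  have f3 := hu 3; have f5 := hu 5; have f6 := hu 6
  rw [z00, z10, z20] at f0
  rw [z01, z51] at f1
  rw [z02, z12, z42, z52] at f2
  rw [z13, z23, z43] at f3
  rw [z25, z45, z55] at f5
  rw [z56] at f6
  have hu2 : u 2 = 0 := by
    have : u 2 * A 2 2 = 0 := by linear_combination f2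
    rcases mul_eq_zero.mp this with h | h
    · exact h
    · exact absurd h n22
  have hu0 : u 0 ≠ 0 := by
    intro h0
    have h1 : u 1 = 0 := by
      have : u 1 * A 1 5 = 0 := by linear_combination f5 - A 0 5 * h0
      rcases mul_eq_zero.mp this with h | h
      · exact h
      · exact absurd h n15
    have h4' : u 4 = 0 := by
      have : u 4 * A 5 3 = 0 := by linear_combination f3 - A 0 3 * h0
      rcases mul_eq_zero.mp this with h | h
      · exact h
      · exact absurd h n53
    have h3' : u 3 = 0 := by
      have : u 3 * A 4 1 = 0 := by
        linear_combination f1 - A 1 1 * h1 - A 2 1 * hu2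
      rcases mul_eq_zero.mp this with h | h
      · exact h
      · exact absurd h n41
    rcases unz with h | h | h | h | h <;> [exact h h0; exact h h1; exact h hu2; exact h h3'; exact h h4']
  have E3 : (A 0 5 * A 1 6 - A 0 6 * A 1 5) * A 4 0 * A 5 3 = A 0 3 * A 1 5 * A 4 6 * A 5 0 := by
    have hX : u 0 * ((A 0 5 * A 1 6 - A 0 6 * A 1 5) * A 4 0 * A 5 3 - A 0 3 * A 1 5 * A 4 6 * A 5 0) = 0 := by
      linear_combination A 1 5 * A 4 6 * A 5 3 * f0 - A 1 5 * A 4 6 * A 5 0 * f3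
        + A 1 6 * A 4 0 * A 5 3 * f5 - A 1 5 * A 4 0 * A 5 3 * f6
        + A 1 5 * A 4 0 * A 5 3 * A 2 6 * hu2
    rcases mul_eq_zero.mp hX with h | h
    · exact absurd h hu0
    · linear_combination h
  exact ⟨E1, E2, E3⟩

set_option maxHeartbeats 4000000 in
/-- The seven-vertex self-dual doubly 3/4 polytope of Figure 4 has no complex
psd-minimal realizations: no scaled slack matrix (the given support pattern, positive
entries elsewhere, rank 4) admits an entrywise complex Hadamard square root of rank 4. -/
theorem stmt_14 (S : Matrix (Fin 7) (Fin 7) ℝ)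
    (hzero : ∀ i j : Fin 7,
      (i, j) ∈ ({(0,0),(0,1),(0,2),(1,0),(1,2),(1,3),(2,0),(2,3),(2,4),(2,5),
                 (3,0),(3,1),(3,4),(3,6),(4,2),(4,3),(4,5),(5,1),(5,2),(5,5),
                 (5,6),(6,4),(6,5),(6,6)} : Set (Fin 7 × Fin 7)) → S i j = 0)
    (hpos : ∀ i j : Fin 7,
      (i, j) ∉ ({(0,0),(0,1),(0,2),(1,0),(1,2),(1,3),(2,0),(2,3),(2,4),(2,5),
                 (3,0),(3,1),(3,4),(3,6),(4,2),(4,3),(4,5),(5,1),(5,2),(5,5),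
                 (5,6),(6,4),(6,5),(6,6)} : Set (Fin 7 × Fin 7)) → 0 < S i j)
    (hrank : S.rank = 4) :
    ¬ ∃ M : Matrix (Fin 7) (Fin 7) ℂ,
        M.rank = 4 ∧ ∀ i j : Fin 7, S i j = Complex.normSq (M i j) := by
  rintro ⟨M, hMrank, hMS⟩
  have mz : ∀ i j : Fin 7, S i j = 0 → M i j = 0 := fun i j h => by
    have h2 := hMS i j
    rw [h] at h2
    exact Complex.normSq_eq_zero.mp h2.symm
  have mp : ∀ i j : Fin 7, 0 < S i j → M i j ≠ 0 := fun i j h => by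
    rw [hMS i j] at h
    exact Complex.normSq_pos.mp h
  -- positivity of the support entries we use
  have p03 : 0 < S 0 3 := hpos 0 3 (by simp only [Set.mem_insert_iff, Set.mem_singleton_iff]; decide)
  have p04 : 0 < S 0 4 := hpos 0 4 (by simp only [Set.mem_insert_iff, Set.mem_singleton_iff]; decide)
  have p05 : 0 < S 0 5 := hpos 0 5 (by simp only [Set.mem_insert_iff, Set.mem_singleton_iff]; decide)
  have p06 : 0 < S 0 6 := hpos 0 6 (by simp only [Set.mem_insert_iff, Set.mem_singleton_iff]; decide)
  have p11 : 0 < S 1 1 := hpos 1 1 (by simp only [Set.mem_insert_iff, Set.mem_singleton_iff]; decide)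
  have p14 : 0 < S 1 4 := hpos 1 4 (by simp only [Set.mem_insert_iff, Set.mem_singleton_iff]; decide)
  have p15 : 0 < S 1 5 := hpos 1 5 (by simp only [Set.mem_insert_iff, Set.mem_singleton_iff]; decide)
  have p16 : 0 < S 1 6 := hpos 1 6 (by simp only [Set.mem_insert_iff, Set.mem_singleton_iff]; decide)
  have p21 : 0 < S 2 1 := hpos 2 1 (by simp only [Set.mem_insert_iff, Set.mem_singleton_iff]; decide)
  have p22 : 0 < S 2 2 := hpos 2 2 (by simp only [Set.mem_insert_iff, Set.mem_singleton_iff]; decide)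
  have p26 : 0 < S 2 6 := hpos 2 6 (by simp only [Set.mem_insert_iff, Set.mem_singleton_iff]; decide)
  have p33 : 0 < S 3 3 := hpos 3 3 (by simp only [Set.mem_insert_iff, Set.mem_singleton_iff]; decide)
  have p35 : 0 < S 3 5 := hpos 3 5 (by simp only [Set.mem_insert_iff, Set.mem_singleton_iff]; decide)
  have p40 : 0 < S 4 0 := hpos 4 0 (by simp only [Set.mem_insert_iff, Set.mem_singleton_iff]; decide)
  have p41 : 0 < S 4 1 := hpos 4 1 (by simp only [Set.mem_insert_iff, Set.mem_singleton_iff]; decide)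
  have p46 : 0 < S 4 6 := hpos 4 6 (by simp only [Set.mem_insert_iff, Set.mem_singleton_iff]; decide)
  have p50 : 0 < S 5 0 := hpos 5 0 (by simp only [Set.mem_insert_iff, Set.mem_singleton_iff]; decide)
  have p53 : 0 < S 5 3 := hpos 5 3 (by simp only [Set.mem_insert_iff, Set.mem_singleton_iff]; decide)
  obtain ⟨E1s, E2s, E3s⟩ := key S hrank.le
    (hzero 0 0 (by simp only [Set.mem_insert_iff, Set.mem_singleton_iff]; decide)) (hzero 0 1 (by simp only [Set.mem_insert_iff, Set.mem_singleton_iff]; decide)) (hzero 0 2 (by simp only [Set.mem_insert_iff, Set.mem_singleton_iff]; decide))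
    (hzero 1 0 (by simp only [Set.mem_insert_iff, Set.mem_singleton_iff]; decide)) (hzero 1 2 (by simp only [Set.mem_insert_iff, Set.mem_singleton_iff]; decide)) (hzero 1 3 (by simp only [Set.mem_insert_iff, Set.mem_singleton_iff]; decide))
    (hzero 2 0 (by simp only [Set.mem_insert_iff, Set.mem_singleton_iff]; decide)) (hzero 2 3 (by simp only [Set.mem_insert_iff, Set.mem_singleton_iff]; decide)) (hzero 2 4 (by simp only [Set.mem_insert_iff, Set.mem_singleton_iff]; decide)) (hzero 2 5 (by simp only [Set.mem_insert_iff, Set.mem_singleton_iff]; decide))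
    (hzero 3 0 (by simp only [Set.mem_insert_iff, Set.mem_singleton_iff]; decide)) (hzero 3 1 (by simp only [Set.mem_insert_iff, Set.mem_singleton_iff]; decide)) (hzero 3 4 (by simp only [Set.mem_insert_iff, Set.mem_singleton_iff]; decide)) (hzero 3 6 (by simp only [Set.mem_insert_iff, Set.mem_singleton_iff]; decide))
    (hzero 4 2 (by simp only [Set.mem_insert_iff, Set.mem_singleton_iff]; decide)) (hzero 4 3 (by simp only [Set.mem_insert_iff, Set.mem_singleton_iff]; decide)) (hzero 4 5 (by simp only [Set.mem_insert_iff, Set.mem_singleton_iff]; decide))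
    (hzero 5 1 (by simp only [Set.mem_insert_iff, Set.mem_singleton_iff]; decide)) (hzero 5 2 (by simp only [Set.mem_insert_iff, Set.mem_singleton_iff]; decide)) (hzero 5 5 (by simp only [Set.mem_insert_iff, Set.mem_singleton_iff]; decide)) (hzero 5 6 (by simp only [Set.mem_insert_iff, Set.mem_singleton_iff]; decide))
    p40.ne' p14.ne' p21.ne' p33.ne' p22.ne' p15.ne' p53.ne' p41.ne'
  obtain ⟨E1m, E2m, E3m⟩ := key M hMrank.le
    (mz 0 0 (hzero 0 0 (by simp only [Set.mem_insert_iff, Set.mem_singleton_iff]; decide))) (mz 0 1 (hzero 0 1 (by simp only [Set.mem_insert_iff, Set.mem_singleton_iff]; decide))) (mz 0 2 (hzero 0 2 (by simp only [Set.mem_insert_iff, Set.mem_singleton_iff]; decide)))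
    (mz 1 0 (hzero 1 0 (by simp only [Set.mem_insert_iff, Set.mem_singleton_iff]; decide))) (mz 1 2 (hzero 1 2 (by simp only [Set.mem_insert_iff, Set.mem_singleton_iff]; decide))) (mz 1 3 (hzero 1 3 (by simp only [Set.mem_insert_iff, Set.mem_singleton_iff]; decide)))
    (mz 2 0 (hzero 2 0 (by simp only [Set.mem_insert_iff, Set.mem_singleton_iff]; decide))) (mz 2 3 (hzero 2 3 (by simp only [Set.mem_insert_iff, Set.mem_singleton_iff]; decide))) (mz 2 4 (hzero 2 4 (by simp only [Set.mem_insert_iff, Set.mem_singleton_iff]; decide)))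
    (mz 2 5 (hzero 2 5 (by simp only [Set.mem_insert_iff, Set.mem_singleton_iff]; decide)))
    (mz 3 0 (hzero 3 0 (by simp only [Set.mem_insert_iff, Set.mem_singleton_iff]; decide))) (mz 3 1 (hzero 3 1 (by simp only [Set.mem_insert_iff, Set.mem_singleton_iff]; decide))) (mz 3 4 (hzero 3 4 (by simp only [Set.mem_insert_iff, Set.mem_singleton_iff]; decide)))
    (mz 3 6 (hzero 3 6 (by simp only [Set.mem_insert_iff, Set.mem_singleton_iff]; decide)))
    (mz 4 2 (hzero 4 2 (by simp only [Set.mem_insert_iff, Set.mem_singleton_iff]; decide))) (mz 4 3 (hzero 4 3 (by simp only [Set.mem_insert_iff, Set.mem_singleton_iff]; decide))) (mz 4 5 (hzero 4 5 (by simp only [Set.mem_insert_iff, Set.mem_singleton_iff]; decide)))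
    (mz 5 1 (hzero 5 1 (by simp only [Set.mem_insert_iff, Set.mem_singleton_iff]; decide))) (mz 5 2 (hzero 5 2 (by simp only [Set.mem_insert_iff, Set.mem_singleton_iff]; decide))) (mz 5 5 (hzero 5 5 (by simp only [Set.mem_insert_iff, Set.mem_singleton_iff]; decide)))
    (mz 5 6 (hzero 5 6 (by simp only [Set.mem_insert_iff, Set.mem_singleton_iff]; decide)))
    (mp 4 0 p40) (mp 1 4 p14) (mp 2 1 p21) (mp 3 3 p33) (mp 2 2 p22) (mp 1 5 p15)
    (mp 5 3 p53) (mp 4 1 p41)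
  -- nonzero complex entries
  have n03 := mp 0 3 p03; have n04 := mp 0 4 p04; have n05 := mp 0 5 p05
  have n06 := mp 0 6 p06; have n14 := mp 1 4 p14; have n21 := mp 2 1 p21
  have n33 := mp 3 3 p33; have n40 := mp 4 0 p40; have n53 := mp 5 3 p53
  have n15 := mp 1 5 p15
  -- gauged (scale-invariant) quantities
  obtain ⟨mP, hmP⟩ : ∃ t : ℂ, t = M 1 5 * M 0 4 / (M 1 4 * M 0 5) := ⟨_, rfl⟩
  obtain ⟨mQ, hmQ⟩ : ∃ t : ℂ, t = M 3 5 * M 0 3 / (M 3 3 * M 0 5) := ⟨_, rfl⟩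
  obtain ⟨mZ, hmZ⟩ : ∃ t : ℂ, t = M 1 1 * M 2 6 * M 0 4 / (M 1 4 * M 2 1 * M 0 6) := ⟨_, rfl⟩
  obtain ⟨mR, hmR⟩ : ∃ t : ℂ, t = M 1 6 * M 0 4 / (M 1 4 * M 0 6) := ⟨_, rfl⟩
  obtain ⟨mW, hmW⟩ : ∃ t : ℂ, t = M 4 6 * M 5 0 * M 0 3 / (M 0 6 * M 5 3 * M 4 0) := ⟨_, rfl⟩
  obtain ⟨sP, hsP⟩ : ∃ t : ℝ, t = S 1 5 * S 0 4 / (S 1 4 * S 0 5) := ⟨_, rfl⟩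
  obtain ⟨sQ, hsQ⟩ : ∃ t : ℝ, t = S 3 5 * S 0 3 / (S 3 3 * S 0 5) := ⟨_, rfl⟩
  obtain ⟨sZ, hsZ⟩ : ∃ t : ℝ, t = S 1 1 * S 2 6 * S 0 4 / (S 1 4 * S 2 1 * S 0 6) := ⟨_, rfl⟩
  obtain ⟨sR, hsR⟩ : ∃ t : ℝ, t = S 1 6 * S 0 4 / (S 1 4 * S 0 6) := ⟨_, rfl⟩
  obtain ⟨sW, hsW⟩ : ∃ t : ℝ, t = S 4 6 * S 5 0 * S 0 3 / (S 0 6 * S 5 3 * S 4 0) := ⟨_, rfl⟩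
  have hsPpos : 0 < sP := by rw [hsP]; positivity
  have hsQpos : 0 < sQ := by rw [hsQ]; positivity
  have hsZpos : 0 < sZ := by rw [hsZ]; positivity
  -- gauged relations, real
  have hsPQ : sP + sQ = 1 := by
    rw [hsP, hsQ]
    field_simp
    linear_combination (-1 : ℝ) * E1s
  have hsRZ : sR = 1 + sZ := by
    rw [hsR, hsZ]
    field_simp
    linear_combination (-1 : ℝ) * E2s
  have hsRW : sR - sP = sP * sW := by
    rw [hsR, hsP, hsW]
    field_simp
    linear_combination E3s
  -- gauged relations, complex
  have hmPQ : mP + mQ = 1 := by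
    rw [hmP, hmQ]
    field_simp
    linear_combination (-1 : ℂ) * E1m
  have hmRZ : mR = 1 + mZ := by
    rw [hmR, hmZ]
    field_simp
    linear_combination (-1 : ℂ) * E2m
  have hmRW : mR - mP = mP * mW := by
    rw [hmR, hmP, hmW]
    field_simp
    linear_combination E3m
  -- normSq links
  have nP : Complex.normSq mP = sP := by
    rw [hmP, hsP, Complex.normSq_div, Complex.normSq_mul, Complex.normSq_mul,
      ← hMS, ← hMS, ← hMS, ← hMS]
  have nQ : Complex.normSq mQ = sQ := by
    rw [hmQ, hsQ, Complex.normSq_div, Complex.normSq_mul, Complex.normSq_mul,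
      ← hMS, ← hMS, ← hMS, ← hMS]
  have nZ : Complex.normSq mZ = sZ := by
    rw [hmZ, hsZ, Complex.normSq_div, Complex.normSq_mul, Complex.normSq_mul,
      Complex.normSq_mul, Complex.normSq_mul, ← hMS, ← hMS, ← hMS, ← hMS, ← hMS, ← hMS]
  have nR : Complex.normSq mR = sR := by
    rw [hmR, hsR, Complex.normSq_div, Complex.normSq_mul, Complex.normSq_mul,
      ← hMS, ← hMS, ← hMS, ← hMS]
  have nW : Complex.normSq mW = sW := by
    rw [hmW, hsW, Complex.normSq_div, Complex.normSq_mul, Complex.normSq_mul,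
      Complex.normSq_mul, Complex.normSq_mul, ← hMS, ← hMS, ← hMS, ← hMS, ← hMS, ← hMS]
  -- pass to real and imaginary parts
  obtain ⟨x, hx⟩ : ∃ t : ℝ, t = mP.re := ⟨_, rfl⟩
  obtain ⟨y, hy⟩ : ∃ t : ℝ, t = mP.im := ⟨_, rfl⟩
  obtain ⟨c, hc⟩ : ∃ t : ℝ, t = mZ.re := ⟨_, rfl⟩
  obtain ⟨d, hd⟩ : ∃ t : ℝ, t = mZ.im := ⟨_, rfl⟩
  have eq1 : x ^ 2 + y ^ 2 = sP := by rw [hx, hy, ← nP, Complex.normSq_apply]; ring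
  have eq1' : (1 - x) ^ 2 + y ^ 2 = sQ := by
    have hQ' : mQ = 1 - mP := by linear_combination hmPQ
    rw [hx, hy, ← nQ, hQ', Complex.normSq_apply, Complex.sub_re, Complex.sub_im,
      Complex.one_re, Complex.one_im]
    ring
  have eq2 : (1 + c) ^ 2 + d ^ 2 = sR := by
    rw [hc, hd, ← nR, hmRZ, Complex.normSq_apply, Complex.add_re, Complex.add_im,
      Complex.one_re, Complex.one_im]
    ring
  have eq2' : c ^ 2 + d ^ 2 = sZ := by rw [hc, hd, ← nZ, Complex.normSq_apply]; ring
  have eq3 : (1 + c - x) ^ 2 + (d - y) ^ 2 = sP * sW := by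
    have h := congrArg Complex.normSq hmRW
    rw [Complex.normSq_mul, nP, nW, hmRZ] at h
    rw [hx, hy, hc, hd, ← h, Complex.normSq_apply, Complex.sub_re, Complex.sub_im, Complex.add_re,
      Complex.add_im, Complex.one_re, Complex.one_im]
    ring
  have hxx : x ^ 2 + y ^ 2 = x := by linear_combination (eq1 + eq1' + hsPQ) / 2
  have hxP : x = sP := by linear_combination eq1 - hxx
  have hcc : c = 0 := by linear_combination (eq2 - eq2' + hsRZ) / 2
  have hd2 : d ^ 2 = sZ := by linear_combination eq2' - c * hcc
  have hy2 : y ^ 2 = sP * sQ := by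
    linear_combination eq1 + (-x - sP) * hxP + (-sP) * hsPQ
  have hyne : y ≠ 0 := by
    intro h0
    have h1 : sP * sQ = 0 := by rw [← hy2, h0]; ring
    exact (mul_pos hsPpos hsQpos).ne' h1
  have hdne : d ≠ 0 := by
    intro h0
    have h1 : sZ = 0 := by rw [← hd2, h0]; ring
    exact hsZpos.ne' h1
  have hyd : y * d = 0 := by
    linear_combination (-(1:ℝ) / 2) *
      (eq3 - hsRW + hsRZ - eq2' + eq1 - 2 * hxx - (2 - 2 * x) * hcc)
  exact mul_ne_zero hyne hdne hyd
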